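/- Let L be a thin Lie algebra over a field F of odd prime characteristic p, with second diamond L_k where k = 2q − 1 for some power q of p with q > 1, with setup elements x, y satisfying [y x^i y] = 0 for 0 ≤ i < k−2 and v := [y x^{k−2}], and assume L/L^k is metabelian. Let h be the smallest integer with h > 1 and [v y x^{h−1} y] ≠ 0. Then h = q − 1. -/

import Mathlib

/-- Left-normed bracket of `a` with `n` copies of `b`:
`lnb a b n = [a b … b]` with `n` occurrences of `b`. -/
def lnb {L : Type*} [LieRing L] (a b : L) : ℕ → L
  | 0 => a
  | n + 1 => ⁅lnb a b n, b⁆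

namespace ThinAux

variable {L : Type*} [LieRing L]

@[simp] lemma lnb_nil (a b : L) : lnb a b 0 = a := rfl

lemma lnb_zero (b : L) (n : ℕ) : lnb (0 : L) b n = 0 := by
  induction n with
  | zero => rfl
  | succ n ih => show ⁅lnb (0:L) b n, b⁆ = 0; rw [ih, zero_lie]

lemma lnb_lnb (a b : L) (m n : ℕ) : lnb (lnb a b m) b n = lnb a b (m + n) := by
  induction n with
  | zero => rfl
  | succ n ih => show ⁅lnb (lnb a b m) b n, b⁆ = _; rw [ih]; rfl

lemma lnb_neg (a b : L) (n : ℕ) : lnb (-a) b n = - lnb a b n := by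
  induction n with
  | zero => rfl
  | succ n ih => show ⁅lnb (-a) b n, b⁆ = _; rw [ih, neg_lie]; rfl

variable {F : Type*} [Field F] [LieAlgebra F L]

lemma lnb_smul (c : F) (a b : L) (n : ℕ) : lnb (c • a) b n = c • lnb a b n := by
  induction n with
  | zero => rfl
  | succ n ih => show ⁅lnb (c • a) b n, b⁆ = _; rw [ih, smul_lie]; rfl

lemma lie_sum {ι : Type*} (s : Finset ι) (f : ι → L) (m : L) :
    ⁅∑ i ∈ s, f i, m⁆ = ∑ i ∈ s, ⁅f i, m⁆ := by
  induction s using Finset.cons_induction with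
  | empty => simp
  | cons a s ha ih => rw [Finset.sum_cons, add_lie, ih, Finset.sum_cons]

lemma sum_collapse_pair {M : Type*} [AddCommMonoid M] (f : ℕ → M) {n r : ℕ} (h1 : r + 1 < n)
    (hz : ∀ i, i < n → i ≠ r → i ≠ r + 1 → f i = 0) :
    ∑ i ∈ Finset.range n, f i = f r + f (r + 1) := by
  have hsub : ({r, r+1} : Finset ℕ) ⊆ Finset.range n := by
    intro i hi
    simp only [Finset.mem_insert, Finset.mem_singleton] at hi
    rcases hi with rfl | rfl <;> simp <;> omega
  rw [← Finset.sum_subset hsub (by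
    intro i hi hni
    simp only [Finset.mem_range] at hi
    simp only [Finset.mem_insert, Finset.mem_singleton, not_or] at hni
    exact hz i hi hni.1 hni.2)]
  rw [Finset.sum_insert (by simp), Finset.sum_singleton]

lemma sum_collapse_single {M : Type*} [AddCommMonoid M] (f : ℕ → M) {n r : ℕ} (h1 : r < n)
    (hz : ∀ i, i < n → i ≠ r → f i = 0) :
    ∑ i ∈ Finset.range n, f i = f r :=
  Finset.sum_eq_single_of_mem r (Finset.mem_range.mpr h1)
    (fun i hi hne => hz i (Finset.mem_range.mp hi) hne)

lemma lie_lnb_expand (B C : L) (n : ℕ) : ∀ A : L,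
    ⁅A, lnb B C n⁆ = ∑ i ∈ Finset.range (n+1),
      ((-1 : F)^i * (n.choose i : F)) • lnb ⁅lnb A C i, B⁆ C (n - i) := by
  induction n with
  | zero => intro A; simp [lnb]
  | succ n ih =>
    intro A
    have step : ⁅A, lnb B C (n+1)⁆ = ⁅⁅A, lnb B C n⁆, C⁆ - ⁅⁅A, C⁆, lnb B C n⁆ := by
      show ⁅A, ⁅lnb B C n, C⁆⁆ = _
      rw [leibniz_lie, ← lie_skew (⁅A, C⁆) (lnb B C n)]
      abel
    rw [step, ih A, ih ⁅A, C⁆, lie_sum]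
    have e1 : ∀ i ∈ Finset.range (n+1),
        ⁅((-1 : F)^i * (n.choose i : F)) • lnb ⁅lnb A C i, B⁆ C (n - i), C⁆
        = ((-1 : F)^i * (n.choose i : F)) • lnb ⁅lnb A C i, B⁆ C (n + 1 - i) := by
      intro i hi
      rw [smul_lie]
      congr 1
      have : n + 1 - i = (n - i) + 1 := by
        have := Finset.mem_range.mp hi; omega
      rw [this]; rfl
    rw [Finset.sum_congr rfl e1]
    have e2 : ∀ i ∈ Finset.range (n+1),
        ((-1 : F)^i * (n.choose i : F)) • lnb ⁅lnb ⁅A, C⁆ C i, B⁆ C (n - i)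
        = ((-1 : F)^i * (n.choose i : F)) • lnb ⁅lnb A C (i+1), B⁆ C (n - i) := by
      intro i hi
      congr 3
      show lnb (lnb A C 1) C i = _
      rw [lnb_lnb]; congr 1; omega
    rw [Finset.sum_congr rfl e2]
    rw [Finset.sum_range_succ' (fun i => ((-1 : F)^i * ((n+1).choose i : F)) •
          lnb ⁅lnb A C i, B⁆ C (n + 1 - i))]
    rw [Finset.sum_range_succ' (fun i => ((-1 : F)^i * (n.choose i : F)) •
          lnb ⁅lnb A C i, B⁆ C (n + 1 - i))]
    rw [Finset.sum_range_succ (fun i => ((-1 : F)^i * (n.choose i : F)) •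
          lnb ⁅lnb A C (i+1), B⁆ C (n - i))]
    rw [Finset.sum_range_succ (fun i => ((-1 : F)^(i+1) * ((n+1).choose (i+1) : F)) •
          lnb ⁅lnb A C (i+1), B⁆ C (n + 1 - (i+1)))]
    have key : ∀ i ∈ Finset.range n,
        ((-1 : F)^(i+1) * (n.choose (i+1) : F)) • lnb ⁅lnb A C (i+1), B⁆ C (n + 1 - (i+1))
        - ((-1 : F)^i * (n.choose i : F)) • lnb ⁅lnb A C (i+1), B⁆ C (n - i)
        = ((-1 : F)^(i+1) * ((n+1).choose (i+1) : F)) • lnb ⁅lnb A C (i+1), B⁆ C (n + 1 - (i+1)) := by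
      intro i hi
      have hni : n + 1 - (i+1) = n - i := by omega
      rw [hni, ← sub_smul]
      congr 1
      rw [Nat.choose_succ_succ' n i]
      push_cast
      ring
    have hS := Finset.sum_congr rfl key
    rw [Finset.sum_sub_distrib] at hS
    rw [← hS]
    simp only [Nat.choose_zero_right, Nat.choose_self, Nat.cast_one, pow_zero, one_mul,
      Nat.sub_self, Nat.add_sub_cancel, pow_succ, mul_neg_one, neg_mul, one_mul, neg_smul,
      mul_one]
    abel

end ThinAux

/-- `Lc` is a grading of `L` (indexed by `ℕ`, with trivial component in degree `0`)
making `L` an (infinite-dimensional) thin Lie algebra: `L` is the internal direct sum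
of the `Lc i`, `⁅Lc i, Lc j⁆ ⊆ Lc (i+j)`, `dim (Lc 1) = 2`, every `Lc i` (`i ≥ 1`) is
nonzero, and the covering property holds: for every `i ≥ 1` and nonzero `z ∈ Lc i`,
`span {⁅z, w⁆ : w ∈ Lc 1} = Lc (i+1)`. -/
structure IsThinGrading (F : Type*) [Field F] (L : Type*) [LieRing L] [LieAlgebra F L]
    (Lc : ℕ → Submodule F L) : Prop where
  zero : Lc 0 = ⊥
  internal : DirectSum.IsInternal Lc
  bracket_mem : ∀ i j : ℕ, ∀ u ∈ Lc i, ∀ w ∈ Lc j, ⁅u, w⁆ ∈ Lc (i + j)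
  dim_one : Module.finrank F (Lc 1) = 2
  nonzero : ∀ i : ℕ, 1 ≤ i → Lc i ≠ ⊥
  covering : ∀ i : ℕ, 1 ≤ i → ∀ z ∈ Lc i, z ≠ 0 →
    Submodule.span F {w | ∃ u ∈ Lc 1, w = ⁅z, u⁆} = Lc (i + 1)

/-- `k` is the degree of the second diamond: the smallest `k > 1` with
`dim (Lc k) = 2`. -/
def IsSecondDiamond {F : Type*} [Field F] {L : Type*} [LieRing L] [LieAlgebra F L]
    (Lc : ℕ → Submodule F L) (k : ℕ) : Prop :=
  IsLeast {i : ℕ | 1 < i ∧ Module.finrank F (Lc i) = 2} k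

/-- The quotient `L/L^k` is metabelian: `⁅Lc i, Lc j⁆ = 0` whenever `i, j ≥ 2` and
`i + j < k`. -/
def QuotientMetabelian {F : Type*} [Field F] {L : Type*} [LieRing L] [LieAlgebra F L]
    (Lc : ℕ → Submodule F L) (k : ℕ) : Prop :=
  ∀ i j : ℕ, 2 ≤ i → 2 ≤ j → i + j < k → ∀ u ∈ Lc i, ∀ w ∈ Lc j, ⁅u, w⁆ = 0

/-- The standard setup in a thin Lie algebra with second diamond `L_k`, `k > 3`:
`y ∈ L_1` is nonzero and centralizes `L_2`, `x, y` form a basis of `L_1` (equivalently,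
they are linearly independent elements of the two-dimensional space `L_1`), and
`[y x^i y] = 0` for `0 ≤ i < k − 2`. -/
structure ThinSetup {F : Type*} [Field F] {L : Type*} [LieRing L] [LieAlgebra F L]
    (Lc : ℕ → Submodule F L) (x y : L) (k : ℕ) : Prop where
  k_gt : 3 < k
  y_mem : y ∈ Lc 1
  x_mem : x ∈ Lc 1
  indep : LinearIndependent F ![x, y]
  y_central : ∀ u ∈ Lc 2, ⁅u, y⁆ = 0
  chain : ∀ i : ℕ, i < k - 2 → ⁅lnb y x i, y⁆ = 0

/-- If `p` is odd and the second diamond occurs in degree `k = 2q − 1`, `q > 1` a power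
of `p`, then the smallest `h > 1` with `[v y x^{h−1} y] ≠ 0` is `h = q − 1`. -/
theorem h_eq_q_sub_one {F : Type*} [Field F] {L : Type*} [LieRing L] [LieAlgebra F L]
    (p : ℕ) (hp : p.Prime) (hp2 : p ≠ 2) (hchar : CharP F p)
    (Lc : ℕ → Submodule F L) (hL : IsThinGrading F L Lc)
    (k q : ℕ) (hq : ∃ m : ℕ, q = p ^ m) (hq1 : 1 < q) (hkq : k = 2 * q - 1)
    (hk : IsSecondDiamond Lc k)
    (x y : L) (hsetup : ThinSetup Lc x y k)
    (v : L) (hv : v = lnb y x (k - 2))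
    (hmet : QuotientMetabelian Lc k)
    (h : ℕ) (hh : IsLeast {h : ℕ | 1 < h ∧ ⁅lnb ⁅v, y⁆ x (h - 1), y⁆ ≠ 0} h) :
    h = q - 1 := by
  obtain ⟨m, hqm⟩ := hq
  have hp3 : 3 ≤ p := by
    rcases hp.two_le.lt_or_eq with h' | h'
    · omega
    · omega
  have hm0 : m ≠ 0 := by rintro rfl; simp at hqm; omega
  have hq3 : 3 ≤ q := by
    have : p ≤ p ^ m := Nat.le_self_pow hm0 p
    rw [hqm]
    omega
  subst hkq
  have hpF : (p : F) = 0 := CharP.cast_eq_zero F p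
  have hqF : (q : F) = 0 := by
    rw [hqm]; push_cast; rw [hpF]; exact zero_pow hm0
  have h2F : (2 : F) ≠ 0 := by
    intro h2
    have : (p : ℕ) ∣ 2 := (CharP.cast_eq_zero_iff F p 2).mp (by exact_mod_cast h2)
    have := Nat.le_of_dvd (by norm_num) this
    omega
  -- basic notation
  set w : L := ⁅v, y⁆ with hw
  -- chain conditions
  have hchain : ∀ n, n < 2*q - 3 → ⁅lnb y x n, y⁆ = 0 := by
    intro n hn; exact hsetup.chain n (by omega)
  have hy0 : y ≠ 0 := hsetup.indep.ne_zero 1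
  -- memberships
  have hlnb_mem : ∀ (z : L) (i n : ℕ), z ∈ Lc i → lnb z x n ∈ Lc (i + n) := by
    intro z i n hz
    induction n with
    | zero => exact hz
    | succ n ih => exact hL.bracket_mem (i+n) 1 _ ih x hsetup.x_mem
  have hU : ∀ n, lnb y x n ∈ Lc (n+1) := by
    intro n
    have := hlnb_mem y 1 n hsetup.y_mem
    rwa [Nat.add_comm] at this
  -- span of Lc 1
  have hspan1 : Submodule.span F (Set.range ![x, y]) = Lc 1 := by
    have hle : Submodule.span F (Set.range ![x, y]) ≤ Lc 1 := by
      rw [Submodule.span_le]; rintro z ⟨i, rfl⟩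
      fin_cases i
      · exact hsetup.x_mem
      · exact hsetup.y_mem
    have hfin : FiniteDimensional F (Lc 1) := Module.finite_of_finrank_eq_succ hL.dim_one
    have hfr : Module.finrank F (Submodule.span F (Set.range ![x, y])) = 2 := by
      rw [finrank_span_eq_card hsetup.indep]; simp
    exact Submodule.eq_of_le_of_finrank_le hle (by rw [hL.dim_one, hfr])
  have hdecomp : ∀ u ∈ Lc 1, ∃ a b : F, u = a • x + b • y := by
    intro u hu
    rw [← hspan1] at hu
    obtain ⟨c, hc⟩ := (Submodule.mem_span_range_iff_exists_fun F).mp hu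
    refine ⟨c 0, c 1, ?_⟩
    rw [← hc]
    simp [Fin.sum_univ_two]
  have hcovpair : ∀ i z, 1 ≤ i → z ∈ Lc i → z ≠ 0 →
      Lc (i+1) = Submodule.span F {⁅z, x⁆, ⁅z, y⁆} := by
    intro i z hi hz hz0
    rw [← hL.covering i hi z hz hz0]
    apply le_antisymm
    · rw [Submodule.span_le]
      rintro _ ⟨u, hu, rfl⟩
      obtain ⟨a, b, rfl⟩ := hdecomp u hu
      rw [lie_add, lie_smul, lie_smul]
      exact Submodule.add_mem _
        (Submodule.smul_mem _ a (Submodule.subset_span (by simp)))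
        (Submodule.smul_mem _ b (Submodule.subset_span (by simp)))
    · rw [Submodule.span_le]
      rintro z' hz'
      simp only [Set.mem_insert_iff, Set.mem_singleton_iff] at hz'
      rcases hz' with rfl | rfl
      · exact Submodule.subset_span ⟨x, hsetup.x_mem, rfl⟩
      · exact Submodule.subset_span ⟨y, hsetup.y_mem, rfl⟩
  have hcov1 : ∀ i z, 1 ≤ i → z ∈ Lc i → z ≠ 0 → ⁅z, y⁆ = 0 →
      Lc (i+1) = Submodule.span F {⁅z, x⁆} ∧ ⁅z, x⁆ ≠ 0 := by
    intro i z hi hz hz0 hzy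
    have hps : Lc (i+1) = Submodule.span F {⁅z, x⁆} := by
      rw [hcovpair i z hi hz hz0, hzy, Set.pair_comm, Submodule.span_insert_zero]
    refine ⟨hps, ?_⟩
    intro h0
    apply hL.nonzero (i+1) (by omega)
    rw [hps, h0]
    exact Submodule.span_zero_singleton F
  -- u-chain spans
  have hUsp : ∀ n, 1 ≤ n → n ≤ 2*q - 3 →
      Lc (n+1) = Submodule.span F {lnb y x n} ∧ lnb y x n ≠ 0 := by
    intro n
    induction n with
    | zero => omega
    | succ n ih =>
      intro _ hn2
      by_cases hn : n = 0
      · subst hn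
        have := hcov1 1 y le_rfl hsetup.y_mem hy0 (lie_self y)
        exact this
      · have hprev := ih (by omega) (by omega)
        have := hcov1 (n+1) (lnb y x n) (by omega) (hU n) hprev.2
          (hchain n (by omega))
        exact this
  have hvU : v = lnb y x (2*q - 3) := by
    have he : 2*q-1-2 = 2*q-3 := by omega
    rw [hv, he]
  have hUv : ∀ s, lnb v x s = lnb y x (2*q - 3 + s) := by
    intro s; rw [hvU, ThinAux.lnb_lnb]
  have hvne : v ≠ 0 := by
    rw [hvU]; exact (hUsp (2*q-3) (by omega) le_rfl).2
  have hvmem : v ∈ Lc (2*q - 2) := by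
    rw [hvU]
    have := hU (2*q-3)
    rwa [show 2*q-3+1 = 2*q-2 by omega] at this
  have hwmem : w ∈ Lc (2*q - 1) := by
    rw [hw]
    have := hL.bracket_mem (2*q-2) 1 v hvmem y hsetup.y_mem
    rwa [show 2*q-2+1 = 2*q-1 by omega] at this
  have hfk : Module.finrank F (Lc (2*q-1)) = 2 := hk.1.2
  have hwne : w ≠ 0 := by
    intro h0
    have hcp := hcovpair (2*q-2) v (by omega) hvmem hvne
    rw [← hw, h0] at hcp
    rw [show 2*q-2+1 = 2*q-1 by omega] at hcp
    have hr : Module.finrank F (Submodule.span F ({⁅v, x⁆, (0:L)} : Set L)) ≤ 1 := by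
      rw [Set.pair_comm, Submodule.span_insert_zero]
      by_cases hvx : ⁅v, x⁆ = 0
      · rw [hvx, Submodule.span_zero_singleton]
        simp
      · rw [finrank_span_singleton hvx]
    rw [hcp] at hfk
    omega
  have hWm : ∀ s, lnb w x s ∈ Lc (2*q - 1 + s) := fun s => hlnb_mem w (2*q-1) s hwmem
  -- T 0 = 0
  have hT0 : ⁅w, y⁆ = 0 := by
    have hv' : v = ⁅lnb y x (2*q-4), x⁆ := by
      rw [hvU, show 2*q-3 = (2*q-4)+1 by omega]; rfl
    have hw' : w = ⁅lnb y x (2*q-4), ⁅x, y⁆⁆ := by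
      rw [hw, hv', lie_lie, hchain (2*q-4) (by omega), lie_zero, sub_zero]
    rw [hw', lie_lie]
    have h1 : ⁅⁅x, y⁆, y⁆ = 0 := by
      rw [← lie_skew x y]
      have he : ⁅y, x⁆ = lnb y x 1 := rfl
      rw [he, neg_lie, hchain 1 (by omega), neg_zero]
    rw [h1, lie_zero, hchain (2*q-4) (by omega), lie_zero, sub_zero]
  -- t and minimality
  have hh1 : 1 < h := hh.1.1
  have hTt : ⁅lnb w x (h-1), y⁆ ≠ 0 := hh.1.2
  set t := h - 1 with ht_def
  have ht1 : 1 ≤ t := by omega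
  have hTz : ∀ i, i < t → ⁅lnb w x i, y⁆ = 0 := by
    intro i hi
    rcases Nat.eq_zero_or_pos i with rfl | hipos
    · exact hT0
    · by_contra hne
      have hmem : (i+1) ∈ {h : ℕ | 1 < h ∧ ⁅lnb w x (h - 1), y⁆ ≠ 0} := by
        constructor
        · omega
        · simpa using hne
      have := hh.2 hmem
      omega
  -- W-line one-dimensional
  have hWL : ∀ s, 1 ≤ s → s ≤ t →
      Lc (2*q - 1 + s) = Submodule.span F {lnb w x s} ∧ lnb w x s ≠ 0 := by
    intro s
    induction s with
    | zero => omega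
    | succ s ih =>
      intro _ hs2
      by_cases hs : s = 0
      · subst hs
        exact hcov1 (2*q-1) w (by omega) hwmem hwne hT0
      · have hprev := ih (by omega) (by omega)
        exact hcov1 (2*q-1+s) (lnb w x s) (by omega) (hWm s) hprev.2 (hTz s (by omega))
  -- A1 = -W1
  have hA1 : ⁅lnb v x 1, y⁆ = -(lnb w x 1) := by
    have e1 := ThinAux.lie_lnb_expand (F := F) y x (2*q-3) (lnb y x 1)
    rw [ThinAux.sum_collapse_pair _ (show (2*q-4)+1 < 2*q-3+1 by omega) ?_] at e1
    · -- evaluate the two surviving terms of e1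
      simp only [ThinAux.lnb_lnb] at e1
      rw [show 1+(2*q-4) = 2*q-3 by omega, show 1+(2*q-4+1) = 2*q-3+1 by omega,
        show 2*q-3-(2*q-4) = 1 by omega, show 2*q-3-(2*q-4+1) = 0 by omega,
        ← hvU, ← hw, ← hUv 1] at e1
      simp only [ThinAux.lnb_nil] at e1
      have hch : ((2*q-3).choose (2*q-4) : F) = -3 := by
        have h' := Nat.choose_symm (show 1 ≤ 2*q-3 by omega)
        rw [show 2*q-3-1 = 2*q-4 by omega, Nat.choose_one_right] at h'
        rw [h']
        rw [Nat.cast_sub (by omega : 3 ≤ 2*q)]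
        push_cast
        rw [hqF]; ring
      have hev : (-1 : F)^(2*q-4) = 1 := Even.neg_one_pow ⟨q-2, by omega⟩
      have hod : (-1 : F)^(2*q-4+1) = -1 := Odd.neg_one_pow ⟨q-2, by omega⟩
      rw [hch, hev, hod,
        show (2*q-3).choose (2*q-4+1) = 1 by
          rw [show 2*q-4+1 = 2*q-3 by omega]; exact Nat.choose_self _] at e1
      -- e1 : ⁅lnb y x 1, lnb y x (2q-3)⁆ = (1 * -3) • lnb w x 1 + (-1 * 1) • ⁅lnb v x 1, y⁆
      have e2 := ThinAux.lie_lnb_expand (F := F) y x 1 (lnb y x (2*q-3))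
      rw [Finset.sum_range_succ, Finset.sum_range_one] at e2
      simp only [ThinAux.lnb_lnb, ThinAux.lnb_nil, pow_zero, one_mul, pow_one,
        Nat.choose_self, Nat.choose_zero_right, Nat.cast_one, Nat.sub_self,
        Nat.sub_zero] at e2
      rw [show 2*q-3+1 = 2*q-3+1 from rfl, ← hvU, ← hw, ← hUv 1] at e2
      -- e2 : ⁅lnb y x (2q-3), lnb y x 1⁆ = lnb w x 1 + (-1) • ⁅lnb v x 1, y⁆
      have hskew : ⁅lnb y x 1, v⁆ = -⁅v, lnb y x 1⁆ :=
        (lie_skew _ _).symm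
      rw [hskew, e2] at e1
      -- e1 : -(lnb w x 1 + (-1) • A1) = (1 * -3) • lnb w x 1 + (-1 * 1) • A1
      have h2' : (2 : F) • (⁅lnb v x 1, y⁆ + lnb w x 1) = 0 := by
        linear_combination (norm := module) e1
      rcases smul_eq_zero.mp h2' with h' | h'
      · exact absurd h' h2F
      · exact eq_neg_of_add_eq_zero_left h'
    · intro i hilt hir hir1
      rw [ThinAux.lnb_lnb, hchain (1+i) (by omega), ThinAux.lnb_zero, smul_zero]

  -- A s = 0 for 2 ≤ s ≤ t
  have hAs : ∀ s, 2 ≤ s → s ≤ t → ⁅lnb v x s, y⁆ = 0 := by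
    intro s hs2 hst
    have hm : lnb v x s ∈ Lc (2*q - 1 + (s-1)) := by
      have := hlnb_mem v (2*q-2) s hvmem
      rwa [show 2*q-2+s = 2*q-1+(s-1) by omega] at this
    rw [(hWL (s-1) (by omega) (by omega)).1] at hm
    obtain ⟨c, hc⟩ := Submodule.mem_span_singleton.mp hm
    rw [← hc, smul_lie, hTz (s-1) (by omega), smul_zero]
  -- the key bracket formula
  have key : ∀ t' r, 1 ≤ t' → t' ≤ t → r ≤ 2*q - 4 →
      ⁅lnb y x (2*q - 3 - r), lnb y x (t' + r)⁆
        = ((-1 : F)^r * ((t'+r+1).choose (r+1) : F)) • lnb w x t' := by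
    intro t' r h1' h2' h3'
    have e := ThinAux.lie_lnb_expand (F := F) y x (t'+r) (lnb y x (2*q-3-r))
    rw [ThinAux.sum_collapse_pair _ (show r+1 < t'+r+1 by omega) ?_] at e
    · rw [e]
      simp only [ThinAux.lnb_lnb]
      rw [show 2*q-3-r+r = 2*q-3 by omega, show 2*q-3-r+(r+1) = 2*q-3+1 by omega]
      rw [← hvU, ← hw, ← hUv 1, hA1]
      rw [show t'+r-r = t' by omega, show t'+r-(r+1) = t'-1 by omega]
      rw [ThinAux.lnb_neg, ThinAux.lnb_lnb, show 1+(t'-1) = t' by omega]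
      rw [smul_neg, ← neg_smul, ← add_smul]
      congr 1
      have hpas : (t'+r+1).choose (r+1) = (t'+r).choose r + (t'+r).choose (r+1) :=
        Nat.choose_succ_succ' (t'+r) r
      rw [hpas]
      push_cast
      ring
    · intro i hilt hir hir1
      rw [ThinAux.lnb_lnb]
      rcases Nat.lt_or_ge i r with hlt | hge
      · rw [hchain (2*q-3-r+i) (by omega), ThinAux.lnb_zero, smul_zero]
      · have hge2 : r+2 ≤ i := by omega
        rw [show 2*q-3-r+i = 2*q-3+(i-r) by omega, ← hUv (i-r),
          hAs (i-r) (by omega) (by omega), ThinAux.lnb_zero, smul_zero]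
  -- cancel
  have cancel : ∀ c : F, c • ⁅lnb w x t, y⁆ = 0 → c = 0 := by
    intro c hc
    rcases smul_eq_zero.mp hc with h' | h'
    · exact h'
    · exact absurd h' hTt
  have cancel2 : ∀ c d : F, c • ⁅lnb w x t, y⁆ = d • ⁅lnb w x t, y⁆ → c = d := by
    intro c d hcd
    have : (c - d) • ⁅lnb w x t, y⁆ = 0 := by rw [sub_smul, hcd, sub_self]
    have h'' := cancel _ this
    exact sub_eq_zero.mp h''
  -- [w, u_{t+1}] collapse
  have hwUt : ⁅w, lnb y x t⁆ = ((-1 : F)^t) • ⁅lnb w x t, y⁆ := by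
    have e := ThinAux.lie_lnb_expand (F := F) y x t w
    rw [ThinAux.sum_collapse_single _ (show t < t+1 by omega) ?_] at e
    · rw [e, Nat.choose_self, Nat.sub_self]
      simp
    · intro i hilt hne
      rw [hTz i (by omega), ThinAux.lnb_zero, smul_zero]
  -- arithmetic lemmas
  have E1 : ∀ i, 0 < i → i < q → ((q.choose i : ℕ) : F) = 0 := by
    intro i h0 hiq
    have hd : p ∣ q.choose i := by
      rw [hqm]
      exact Nat.Prime.dvd_choose_pow hp (by omega) (by rw [← hqm]; omega)
    exact (CharP.cast_eq_zero_iff F p _).mpr hd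
  have E2 : ∀ i, i ≤ q - 1 → (((q-1).choose i : ℕ) : F) = (-1)^i := by
    intro i
    induction i with
    | zero => intro _; simp
    | succ i ih =>
      intro hi
      have hii := ih (by omega)
      have hps : q.choose (i+1) = (q-1).choose i + (q-1).choose (i+1) := by
        conv_lhs => rw [show q = (q-1)+1 by omega]
        exact Nat.choose_succ_succ' (q-1) i
      have h0 : ((q.choose (i+1) : ℕ) : F) = 0 := E1 (i+1) (by omega) (by omega)
      rw [hps] at h0
      push_cast at h0
      rw [hii] at h0
      linear_combination h0
  have E3 : ∀ c, c ≤ q - 2 → (((q-2).choose c : ℕ) : F) = (-1)^c * (c+1 : F) := by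
    intro c
    induction c with
    | zero => intro _; simp
    | succ c ih =>
      intro hc
      have hcc := ih (by omega)
      have hps : (q-1).choose (c+1) = (q-2).choose c + (q-2).choose (c+1) := by
        conv_lhs => rw [show q-1 = (q-2)+1 by omega]
        exact Nat.choose_succ_succ' (q-2) c
      have h0 : (((q-1).choose (c+1) : ℕ) : F) = (-1)^(c+1) := E2 (c+1) (by omega)
      rw [hps] at h0
      push_cast at h0
      rw [hcc] at h0
      push_cast
      linear_combination h0
  have AR1 : ∀ s, s < q → (((s+q).choose q : ℕ) : F) = 1 := by
    intro s hs
    have hv' : (((s+q).choose q : ℕ) : F)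
        = ∑ ij ∈ Finset.HasAntidiagonal.antidiagonal q, ((s.choose ij.1 : F) * (q.choose ij.2 : F)) := by
      rw [Nat.add_choose_eq]
      push_cast
      rfl
    rw [hv', Finset.sum_eq_single_of_mem (0, q)
      (Finset.HasAntidiagonal.mem_antidiagonal.mpr (by simp))]
    · simp
    · rintro ⟨i, j⟩ hmem hne
      have hij : i + j = q := Finset.HasAntidiagonal.mem_antidiagonal.mp hmem
      by_cases hj : j = q
      · exfalso; apply hne; subst hj; simp; omega
      · by_cases hj0 : j = 0
        · subst hj0
          have : i = q := by omega
          subst this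
          rw [Nat.choose_eq_zero_of_lt hs]
          simp
        · rw [E1 j (by omega) (by omega), mul_zero]
  have AR2 : ∀ c, c < q → (((q+(q-2)).choose c : ℕ) : F) = (((q-2).choose c : ℕ) : F) := by
    intro c hc
    have hv' : (((q+(q-2)).choose c : ℕ) : F)
        = ∑ ij ∈ Finset.HasAntidiagonal.antidiagonal c, ((q.choose ij.1 : F) * ((q-2).choose ij.2 : F)) := by
      rw [Nat.add_choose_eq]
      push_cast
      rfl
    rw [hv', Finset.sum_eq_single_of_mem (0, c)
      (Finset.HasAntidiagonal.mem_antidiagonal.mpr (by simp))]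
    · simp
    · rintro ⟨i, j⟩ hmem hne
      have hij : i + j = c := Finset.HasAntidiagonal.mem_antidiagonal.mp hmem
      have hi0 : i ≠ 0 := by
        intro h0; apply hne; subst h0; simp; omega
      rw [E1 i (by omega) (by omega), zero_mul]
  -- main case analysis
  have goal_t : t = q - 2 := by
    rcases Nat.lt_or_ge t (2*q-3) with htlt | htge
    · -- t ≤ 2q-4 branch
      -- EII
      have EII : ((t : F) + 1) = (-1 : F)^t := by
        have e0 := key t 0 ht1 le_rfl (by omega)
        simp only [Nat.sub_zero, Nat.add_zero, Nat.zero_add, pow_zero, one_mul,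
          Nat.choose_one_right] at e0
        have ey : ⁅⁅lnb y x (2*q-3), lnb y x t⁆, y⁆
            = ((t+1 : ℕ) : F) • ⁅lnb w x t, y⁆ := by
          rw [e0, smul_lie]
        rw [lie_lie, hchain t (by omega), lie_zero, zero_sub, ← hvU, ← hw,
          lie_skew, hwUt] at ey
        have hc := cancel2 _ _ ey
        push_cast at hc
        exact hc.symm
      -- EIII
      have EIII : (((2*q-2).choose (2*q-2-t) : ℕ) : F) = 1 := by
        have e3 := key t (2*q-3-t) ht1 le_rfl (by omega)
        rw [show 2*q-3-(2*q-3-t) = t by omega, show t+(2*q-3-t) = 2*q-3 by omega,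
          show 2*q-3+1 = 2*q-2 by omega, show 2*q-3-t+1 = 2*q-2-t by omega] at e3
        have ey : ⁅⁅lnb y x t, lnb y x (2*q-3)⁆, y⁆
            = ((-1 : F)^(2*q-3-t) * ((2*q-2).choose (2*q-2-t) : F)) • ⁅lnb w x t, y⁆ := by
          rw [e3, smul_lie]
        rw [lie_lie, hchain t (by omega), lie_zero, sub_zero, ← hvU, ← hw,
          ← lie_skew (lnb y x t) w, hwUt, ← neg_smul] at ey
        have ec := cancel2 _ _ ey
        -- ec : -(-1)^t = (-1)^(2q-3-t) * C
        have hodd : (-1 : F)^(2*q-3-t) * (-1 : F)^t = -1 := by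
          rw [← pow_add, show 2*q-3-t+t = 2*q-3 by omega]
          exact Odd.neg_one_pow ⟨q-2, by omega⟩
        have hsq : (-1 : F)^t * (-1 : F)^t = 1 := by
          rw [← pow_add]; exact Even.neg_one_pow ⟨t, by omega⟩
        have hB : (-1 : F)^(2*q-3-t) = -(-1 : F)^t := by
          linear_combination ((-1 : F)^t) * hodd - ((-1 : F)^(2*q-3-t)) * hsq
        rw [hB] at ec
        have hA0 : (-(-1 : F)^t) ≠ 0 := neg_ne_zero.mpr (pow_ne_zero _ (by norm_num))
        have h5 : (-(-1 : F)^t) * 1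
            = (-(-1 : F)^t) * (((2*q-2).choose (2*q-2-t) : ℕ) : F) := by
          rw [mul_one]; exact ec
        exact (mul_left_cancel₀ hA0 h5).symm
      -- EqI
      have EqI : ∀ r, 1 ≤ r → r ≤ 2*q-4-t → (((t+r+1).choose (r+1) : ℕ) : F) = 0 := by
        intro r hr1 hr2
        have e := key t r ht1 le_rfl (by omega)
        have ey : ⁅⁅lnb y x (2*q-3-r), lnb y x (t+r)⁆, y⁆
            = ((-1 : F)^r * ((t+r+1).choose (r+1) : F)) • ⁅lnb w x t, y⁆ := by
          rw [e, smul_lie]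
        rw [lie_lie, hchain (t+r) (by omega), lie_zero, hchain (2*q-3-r) (by omega),
          lie_zero, sub_zero] at ey
        have hc := cancel _ ey.symm
        rcases mul_eq_zero.mp hc with h' | h'
        · exact absurd h' (pow_ne_zero _ (by norm_num))
        · exact h' 
      -- case split on t
      rcases Nat.lt_trichotomy t (q-2) with h1 | h1 | h1
      · -- t ≤ q-3 : contradiction
        exfalso
        have := EqI (q-1) (by omega) (by omega)
        rw [show t+(q-1)+1 = t+q by omega, show (q-1)+1 = q by omega] at this
        rw [AR1 t (by omega)] at this
        exact one_ne_zero this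
      · exact h1
      · -- t ≥ q-1
        exfalso
        rcases Nat.eq_or_lt_of_le h1 with h2 | h2
        · -- t = q-1
          have hteq : t = q - 1 := by omega
          rw [hteq] at EII
          have hcast : ((q-1 : ℕ) : F) = -1 := by
            push_cast [Nat.cast_sub (by omega : 1 ≤ q)]
            rw [hqF]; ring
          have hpow : (-1 : F)^(q-1) = 1 := by
            have : Even (q - 1) := by
              rcases Nat.even_or_odd q with he | ho
              · exfalso
                have : (2 : ℕ) ∣ q := he.two_dvd
                rw [hqm] at this
                have := (Nat.prime_dvd_prime_iff_eq Nat.prime_two hp).mp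
                  (Nat.Prime.dvd_of_dvd_pow Nat.prime_two this)
                omega
              · exact Nat.Odd.sub_odd ho odd_one
            exact this.neg_one_pow
          rw [hcast, hpow] at EII
          have : (0 : F) = 1 := by linear_combination EII
          exact one_ne_zero this.symm
        · -- q ≤ t ≤ 2q-4
          have htq : q ≤ t := by omega
          set j := t - q with hj_def
          have hjt : t = q + j := by omega
          have hjb : j ≤ q - 4 := by omega
          -- EIII reduction
          have hc : 2*q-2-t = q-2-j := by omega
          rw [hc] at EIII
          rw [show 2*q-2 = q + (q-2) by omega] at EIII
          rw [AR2 (q-2-j) (by omega)] at EIII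
          rw [E3 (q-2-j) (by omega)] at EIII
          -- cast simplifications
          have hc1 : ((q-2-j : ℕ) : F) + 1 = -((j : F) + 1) := by
            have : ((q-2-j : ℕ) : F) = (q : F) - 2 - j := by
              push_cast [Nat.cast_sub (by omega : j ≤ q-2), Nat.cast_sub (by omega : 2 ≤ q)]
              ring
            rw [this, hqF]; ring
          rw [hc1] at EIII
          -- EII reduction
          have hc2 : ((t : ℕ) : F) + 1 = (j : F) + 1 := by
            rw [hjt]; push_cast; rw [hqF]; ring
          rw [hc2] at EII
          -- parity
          have hqodd : Odd q := by
            rcases Nat.even_or_odd q with he | ho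
            · exfalso
              have : (2 : ℕ) ∣ q := he.two_dvd
              rw [hqm] at this
              have := (Nat.prime_dvd_prime_iff_eq Nat.prime_two hp).mp
                (Nat.Prime.dvd_of_dvd_pow Nat.prime_two this)
              omega
            · exact ho
          have hpar : (-1 : F)^t * (-1 : F)^(q-2-j) = 1 := by
            rw [← pow_add]
            apply Even.neg_one_pow
            refine ⟨q - 1, ?_⟩
            omega
          have hsq : (-1 : F)^t * (-1 : F)^t = 1 := by
            rw [← pow_add]; exact Even.neg_one_pow ⟨t, by omega⟩
          -- combine: EII : (j+1) = (-1)^t ; EIII : (-1)^(q-2-j) * (-((j+1))) = 1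
          have : (2 : F) = 0 := by
            linear_combination -hpar - EIII - (-1 : F)^(q-2-j) * EII
          exact h2F this
    · -- t ≥ 2q-3 : contradiction via [v,v] = 0
      exfalso
      have e := key (2*q-3) 0 (by omega) (by omega) (by omega)
      rw [Nat.sub_zero, Nat.add_zero] at e
      rw [lie_self] at e
      have hco : ((-1 : F)^0 * ((2*q-3+1).choose (0+1) : F)) = ((2*q-2 : ℕ) : F) := by
        rw [pow_zero, one_mul]
        congr 1
        rw [show 2*q-3+1 = 2*q-2 by omega, Nat.choose_one_right]
      rw [hco] at e
      have hWne : lnb w x (2*q-3) ≠ 0 := (hWL (2*q-3) (by omega) (by omega)).2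
      have hc0 : ((2*q-2 : ℕ) : F) = 0 := by
        rcases smul_eq_zero.mp e.symm with h' | h'
        · exact h'
        · exact absurd h' hWne
      have hdvd : p ∣ 2*q-2 := (CharP.cast_eq_zero_iff F p _).mp hc0
      have hdq : p ∣ q := by rw [hqm]; exact dvd_pow_self p hm0
      have : p ∣ 2 := by
        have h2q : p ∣ 2*q := Dvd.dvd.mul_left hdq 2
        have := Nat.dvd_sub h2q hdvd
        rwa [show 2*q - (2*q-2) = 2 by omega] at this
      have := Nat.le_of_dvd (by norm_num) this
      omega
  omega
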